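/- Let H be a group generated by two elements w and t, and suppose there is a homomorphism ρ : H → ℤ with ρ(t) = 1 and ρ(w) = 0. If the family {t^i w t^{-i} : i ∈ ℤ} is a basis of a free subgroup of H, then H is a free group of rank 2 (freely generated by w and t). -/

import Mathlib

/-- if moreover `{t^i w t^{-i} : i ∈ ℤ}` is a basis of a free subgroup,
then `H` is free of rank 2, freely generated by `w` and `t`. -/
theorem stmt_3 {H : Type*} [Group H] (w t : H)
    (hgen : Subgroup.closure ({w, t} : Set H) = ⊤)
    (ρ : H →* Multiplicative ℤ)
    (hρt : ρ t = Multiplicative.ofAdd 1) (hρw : ρ w = 1)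
    (hfree : Function.Injective
      (FreeGroup.lift (fun i : ℤ => t ^ i * w * (t ^ i)⁻¹) : FreeGroup ℤ →* H)) :
    Function.Bijective
      (FreeGroup.lift (fun b : Bool => if b then w else t) : FreeGroup Bool →* H) := by
  set L : FreeGroup Bool →* H := FreeGroup.lift (fun b : Bool => if b then w else t) with hL
  set ω : FreeGroup Bool := FreeGroup.of true with hω
  set τ : FreeGroup Bool := FreeGroup.of false with hτ
  have hLω : L ω = w := by simp [hL, hω]
  have hLτ : L τ = t := by simp [hL, hτ]
  set L' : FreeGroup ℤ →* FreeGroup Bool :=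
    FreeGroup.lift (fun i : ℤ => τ ^ i * ω * (τ ^ i)⁻¹) with hL'
  -- conjugation by powers of τ preserves the range of L'
  have hconj : ∀ (k : ℤ) (n : FreeGroup Bool), n ∈ L'.range →
      τ ^ k * n * (τ ^ k)⁻¹ ∈ L'.range := by
    intro k n hn
    obtain ⟨g, rfl⟩ := hn
    have key : ((MulAut.conj (τ ^ k)).toMonoidHom.comp L') =
        L'.comp (FreeGroup.lift (fun i : ℤ => FreeGroup.of (i + k))) := by
      apply FreeGroup.ext_hom
      intro i
      simp only [MonoidHom.comp_apply, MulEquiv.coe_toMonoidHom, FreeGroup.lift_apply_of, hL']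
      simp only [FreeGroup.lift_apply_of, MulAut.conj_apply]
      rw [zpow_add]
      group
    have := DFunLike.congr_fun key g
    simp only [MonoidHom.comp_apply, MulEquiv.coe_toMonoidHom, MulAut.conj_apply] at this
    rw [this]
    exact ⟨_, rfl⟩
  -- L ∘ L' is the lift of the conjugate family
  have hLL' : L.comp L' = FreeGroup.lift (fun i : ℤ => t ^ i * w * (t ^ i)⁻¹) := by
    apply FreeGroup.ext_hom
    intro i
    simp only [MonoidHom.comp_apply, hL', FreeGroup.lift_apply_of, map_mul, map_inv, map_zpow,
      hLω, hLτ]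
  -- the key structural fact
  have hpure : ∀ b : Bool, (pure b : FreeGroup Bool) = FreeGroup.of b := fun _ => rfl
  have hkey : ∀ x : FreeGroup Bool,
      x * τ ^ (-(Multiplicative.toAdd (ρ (L x)))) ∈ L'.range := by
    intro x
    induction x using FreeGroup.induction_on with
    | C1 => simpa using one_mem L'.range
    | of b =>
        cases b with
        | true =>
            have : ρ (L ω) = 1 := by rw [hLω, hρw]
            have h0 : (Multiplicative.toAdd (ρ (L (FreeGroup.of true)))) = 0 := by
              rw [← hω, this]; rfl
            rw [show (FreeGroup.of true : FreeGroup Bool) = ω from rfl, h0]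
            simp only [neg_zero, zpow_zero, mul_one]
            exact ⟨FreeGroup.of (0 : ℤ), by simp [hL']⟩
        | false =>
            have h1 : (Multiplicative.toAdd (ρ (L (FreeGroup.of false)))) = 1 := by
              rw [← hτ, hLτ, hρt]; rfl
            rw [show (FreeGroup.of false : FreeGroup Bool) = τ from rfl, h1]
            simpa using one_mem L'.range
    | inv_of b hb =>
        cases b with
        | true =>
            have h0 : (Multiplicative.toAdd (ρ (L (FreeGroup.of true)⁻¹))) = 0 := by
              rw [show (FreeGroup.of true : FreeGroup Bool) = ω from rfl]
              rw [map_inv, map_inv, hLω, hρw]; rfl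
            rw [h0]
            simp only [neg_zero, zpow_zero, mul_one]
            refine inv_mem ?_
            exact ⟨FreeGroup.of (0 : ℤ), by simp [hL', hω]⟩
        | false =>
            have h1 : (Multiplicative.toAdd (ρ (L (FreeGroup.of false)⁻¹))) = -1 := by
              rw [show (FreeGroup.of false : FreeGroup Bool) = τ from rfl]
              rw [map_inv, map_inv, hLτ, hρt]; rfl
            rw [h1]
            have : (FreeGroup.of false : FreeGroup Bool)⁻¹ * τ ^ (-(-1) : ℤ) = 1 := by
              rw [show (FreeGroup.of false : FreeGroup Bool) = τ from rfl]
              group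
            rw [this]
            exact one_mem _
    | mul x y hx hy =>
        set a : ℤ := Multiplicative.toAdd (ρ (L x)) with ha
        set b : ℤ := Multiplicative.toAdd (ρ (L y)) with hb
        have hab : Multiplicative.toAdd (ρ (L (x * y))) = a + b := by
          rw [map_mul, map_mul]; rfl
        rw [hab]
        have heq : x * y * τ ^ (-(a + b)) =
            (x * τ ^ (-a)) * (τ ^ a * (y * τ ^ (-b)) * (τ ^ a)⁻¹) := by
          group
        rw [heq]
        exact mul_mem hx (hconj a _ hy)
  constructor
  · -- injective
    rw [injective_iff_map_eq_one]
    intro x hx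
    have h0 : Multiplicative.toAdd (ρ (L x)) = 0 := by rw [hx, map_one]; rfl
    have hx' := hkey x
    rw [h0] at hx'
    simp only [neg_zero, zpow_zero, mul_one] at hx'
    obtain ⟨g, hg⟩ := hx'
    have : (FreeGroup.lift (fun i : ℤ => t ^ i * w * (t ^ i)⁻¹) : FreeGroup ℤ →* H) g = 1 := by
      rw [← hLL']
      simp only [MonoidHom.comp_apply, hg, hx]
    have hg1 : g = 1 := hfree (by rw [this, map_one])
    rw [← hg, hg1, map_one]
  · -- surjective
    rw [← MonoidHom.range_eq_top]
    rw [eq_top_iff, ← hgen, Subgroup.closure_le]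
    rintro x (rfl | rfl)
    · exact ⟨ω, hLω⟩
    · exact ⟨τ, hLτ⟩
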